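/- For any prime p and positive integer a, the sum ∑_{k=1}^{p^a-1} (-1)^k · B_k(x) is congruent to ∑_{r=1}^{a} x^{p^r - 1} modulo p·Z_p[x]. -/

import Mathlib

/-- Stirling numbers of the second kind. -/
def stirling2 : ℕ → ℕ → ℕ
  | 0, 0 => 1
  | 0, _ + 1 => 0
  | _ + 1, 0 => 0
  | n + 1, k + 1 => (k + 1) * stirling2 n (k + 1) + stirling2 n k

/-- The Bell polynomial `B_n(x) = ∑_{k=0}^n S(n,k) x^k`. -/
noncomputable def bellPoly (R : Type*) [CommRing R] (n : ℕ) : Polynomial R :=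
  ∑ k ∈ Finset.range (n + 1), Polynomial.C (stirling2 n k : R) * Polynomial.X ^ k

namespace AltBell
open Finset Polynomial

lemma stirling2_zero_left (k : ℕ) : stirling2 0 k = if k = 0 then 1 else 0 := by
  cases k <;> simp [stirling2]

lemma stirling2_zero_right (n : ℕ) : stirling2 (n+1) 0 = 0 := rfl

lemma stirling2_succ (n k : ℕ) :
    stirling2 (n+1) (k+1) = (k + 1) * stirling2 n (k+1) + stirling2 n k := rfl

lemma stirling2_eq_zero_of_lt : ∀ n k, n < k → stirling2 n k = 0 := by
  intro n
  induction n with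
  | zero => intro k hk; cases k; · omega
            · simp [stirling2]
  | succ n ih =>
    intro k hk
    cases k with
    | zero => omega
    | succ k => rw [stirling2_succ, ih (k+1) (by omega), ih k (by omega)]; ring

lemma stirling2_self : ∀ n, stirling2 n n = 1 := by
  intro n
  induction n with
  | zero => rfl
  | succ n ih => rw [stirling2_succ, ih, stirling2_eq_zero_of_lt n (n+1) (by omega)]; ring

lemma stirling2_one (k : ℕ) : stirling2 1 k = if k = 1 then 1 else 0 := by
  match k with
  | 0 => rfl
  | 1 => rfl
  | (k+2) => rw [stirling2_eq_zero_of_lt 1 (k+2) (by omega)]; simp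

/-- `F n k = ∑_j (-1)^(k-j) C(k,j) j^n`. -/
def F (n k : ℕ) : ℤ := ∑ j ∈ range (k+1), (-1:ℤ)^(k-j) * (k.choose j) * (j:ℤ)^n

lemma F_zero (k : ℕ) : F 0 k = if k = 0 then 1 else 0 := by
  have h : F 0 k = ∑ j ∈ range (k+1), (-1:ℤ)^j * (k.choose j) := by
    rw [F, ← Finset.sum_range_reflect]
    refine Finset.sum_congr rfl fun j hj => ?_
    simp only [mem_range] at hj
    have h0 : k + 1 - 1 - j = k - j := by omega
    have h1 : k - (k - j) = j := by omega
    rw [h0, h1, Nat.choose_symm (by omega)]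
    simp
  rw [h, Int.alternating_sum_range_choose]

lemma factorial_mul_stirling2 (n : ℕ) : ∀ k, (k.factorial : ℤ) * stirling2 n k = F n k := by
  induction n with
  | zero =>
    intro k
    rw [F_zero, stirling2_zero_left]
    cases k <;> simp
  | succ n ih =>
    intro k
    cases k with
    | zero =>
      simp [F, stirling2_zero_right]
    | succ k =>
      have hrec : ((k+1).factorial : ℤ) * stirling2 (n+1) (k+1)
          = (k+1) * (F n (k+1) + F n k) := by
        rw [stirling2_succ]
        push_cast
        rw [← ih (k+1), ← ih k]
        rw [Nat.factorial_succ]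
        push_cast
        ring
      rw [hrec]
      -- now compute F (n+1) (k+1)
      have hT : F (n+1) (k+1) = (k+1) * ∑ i ∈ range (k+1),
          (-1:ℤ)^(k-i) * (k.choose i) * ((i:ℤ)+1)^n := by
        rw [F, Finset.sum_range_succ']
        simp only [Nat.sub_zero, Nat.choose_zero_right, Nat.cast_zero, Nat.cast_one,
          zero_pow (Nat.succ_ne_zero n), mul_zero, add_zero]
        rw [Finset.mul_sum]
        refine Finset.sum_congr rfl fun i hi => ?_
        have h1 : k + 1 - (i + 1) = k - i := by omega
        have h2 : ((k+1).choose (i+1) : ℤ) * ((i:ℤ)+1) = (k+1) * (k.choose i) := by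
          have := Nat.add_one_mul_choose_eq k i
          have : ((k+1) * k.choose i : ℤ) = ((k+1).choose (i+1) * (i+1) : ℤ) := by
            exact_mod_cast congrArg (Nat.cast (R := ℤ)) this
          linarith [this]
        rw [h1]
        push_cast
        calc (-1:ℤ)^(k-i) * ((k+1).choose (i+1)) * ((i:ℤ)+1)^(n+1)
            = (-1:ℤ)^(k-i) * (((k+1).choose (i+1)) * ((i:ℤ)+1)) * ((i:ℤ)+1)^n := by ring
          _ = (-1:ℤ)^(k-i) * ((k+1) * (k.choose i)) * ((i:ℤ)+1)^n := by rw [h2]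
          _ = (k+1) * ((-1:ℤ)^(k-i) * (k.choose i) * ((i:ℤ)+1)^n) := by ring
      rw [hT]
      congr 1
      -- F n (k+1) + F n k = ∑ i ∈ range (k+1), (-1)^(k-i) * C(k,i) * (i+1)^n
      have e1 : F n (k+1) = (∑ i ∈ range (k+1),
          (-1:ℤ)^(k-i) * ((k.choose i : ℤ) + (k.choose (i+1) : ℤ)) * ((i:ℤ)+1)^n)
          + (-1:ℤ)^(k+1) * (0:ℤ)^n := by
        rw [F, Finset.sum_range_succ' _ (k+1)]
        congr 1
        · refine Finset.sum_congr rfl fun i hi => ?_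
          have h1 : k + 1 - (i+1) = k - i := by omega
          rw [h1, Nat.choose_succ_succ]
          push_cast
          ring
        · simp
      have e2 : F n k = (∑ i ∈ range k,
          (-1:ℤ)^(k-1-i) * (k.choose (i+1) : ℤ) * ((i:ℤ)+1)^n) + (-1:ℤ)^k * (0:ℤ)^n := by
        rw [F, Finset.sum_range_succ' _ k]
        congr 1
        · refine Finset.sum_congr rfl fun i hi => ?_
          have h1 : k - (i+1) = k - 1 - i := by omega
          rw [h1]
          push_cast
          ring
        · simp
      have e4 : ∑ i ∈ range (k+1),
          (-1:ℤ)^(k-i) * ((k.choose i : ℤ) + (k.choose (i+1) : ℤ)) * ((i:ℤ)+1)^n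
          = (∑ i ∈ range (k+1), (-1:ℤ)^(k-i) * (k.choose i : ℤ) * ((i:ℤ)+1)^n)
            + ∑ i ∈ range (k+1), (-1:ℤ)^(k-i) * (k.choose (i+1) : ℤ) * ((i:ℤ)+1)^n := by
        rw [← Finset.sum_add_distrib]
        exact Finset.sum_congr rfl fun i _ => by ring
      have e3 : ∑ i ∈ range (k+1), (-1:ℤ)^(k-i) * (k.choose (i+1) : ℤ) * ((i:ℤ)+1)^n
          = ∑ i ∈ range k, (-1:ℤ)^(k-i) * (k.choose (i+1) : ℤ) * ((i:ℤ)+1)^n := by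
        rw [Finset.sum_range_succ, Nat.choose_succ_self]
        simp
      have e5 : (∑ i ∈ range k, (-1:ℤ)^(k-i) * (k.choose (i+1) : ℤ) * ((i:ℤ)+1)^n)
          + ∑ i ∈ range k, (-1:ℤ)^(k-1-i) * (k.choose (i+1) : ℤ) * ((i:ℤ)+1)^n = 0 := by
        rw [← Finset.sum_add_distrib]
        refine Finset.sum_eq_zero fun i hi => ?_
        simp only [mem_range] at hi
        have h1 : k - i = (k-1-i)+1 := by omega
        rw [h1, pow_succ]
        ring
      rw [e1, e2, e4, e3, pow_succ]
      linarith [e5]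

section ModP

variable (p : ℕ) [hp : Fact p.Prime]

lemma geom_zmod (t : ZMod p) : ∑ j ∈ range p, t^j = if t = 1 then 0 else 1 := by
  split_ifs with h
  · subst h
    simp [Finset.sum_const, ZMod.natCast_self]
  · have h2 : (t - 1) ≠ 0 := sub_ne_zero.mpr h
    apply mul_right_cancel₀ h2
    rw [geom_sum_mul, ZMod.pow_card, one_mul]

lemma F_cast (n k : ℕ) : ((k.factorial : ZMod p)) * (stirling2 n k : ZMod p)
    = ∑ j ∈ range (k+1), (-1:ZMod p)^(k-j) * (k.choose j) * (j:ZMod p)^n := by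
  have h := congrArg (fun z : ℤ => (z : ZMod p)) (factorial_mul_stirling2 n k)
  simp only [F] at h
  push_cast at h
  exact h

lemma factorial_ne_zero (k : ℕ) (hk : k < p) : ((k.factorial : ZMod p)) ≠ 0 := by
  rw [Ne, ZMod.natCast_eq_zero_iff]
  intro hdvd
  have := (Nat.Prime.dvd_factorial hp.out).mp hdvd
  omega

lemma stirling2_p_mod (k : ℕ) (hk : k < p) :
    (stirling2 p k : ZMod p) = if k = 1 then 1 else 0 := by
  have h1 : ((k.factorial : ZMod p)) * (stirling2 p k : ZMod p)
      = ((k.factorial : ZMod p)) * (stirling2 1 k : ZMod p) := by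
    rw [F_cast, F_cast]
    refine Finset.sum_congr rfl fun j hj => ?_
    rw [ZMod.pow_card, pow_one]
  have h2 := mul_left_cancel₀ (factorial_ne_zero p k hk) h1
  rw [h2, stirling2_one]
  split_ifs <;> simp

lemma neg_one_nat_cast : ((p - 1 : ℕ) : ZMod p) = -1 := by
  have h1 : (1:ℕ) ≤ p := hp.out.one_lt.le
  push_cast [Nat.cast_sub h1]
  simp

lemma alt_sum_stirling (k : ℕ) (hk : k < p) :
    ∑ j ∈ range p, (-1:ZMod p)^j * (stirling2 j k : ZMod p)
      = (if k = 0 then 1 else 0) + (if k = p-1 then 1 else 0) := by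
  have hfac := factorial_ne_zero p k hk
  apply mul_left_cancel₀ hfac
  have lhs : ((k.factorial : ZMod p)) * ∑ j ∈ range p, (-1:ZMod p)^j * (stirling2 j k : ZMod p)
      = ∑ i ∈ range (k+1), (-1:ZMod p)^(k-i) * (k.choose i) *
          (if (-(i:ZMod p)) = 1 then 0 else 1) := by
    rw [Finset.mul_sum]
    have e1 : ∀ j, ((k.factorial : ZMod p)) * ((-1:ZMod p)^j * (stirling2 j k : ZMod p))
        = ∑ i ∈ range (k+1), (-1:ZMod p)^(k-i) * (k.choose i) * (-(i:ZMod p))^j := by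
      intro j
      rw [← mul_assoc, mul_comm ((k.factorial : ZMod p)) ((-1:ZMod p)^j), mul_assoc,
        F_cast, Finset.mul_sum]
      refine Finset.sum_congr rfl fun i hi => ?_
      rw [neg_pow]
      ring
    simp only [e1]
    rw [Finset.sum_comm]
    refine Finset.sum_congr rfl fun i hi => ?_
    rw [← Finset.mul_sum, geom_zmod]
  rw [lhs]
  have split : ∀ i ∈ range (k+1),
      (-1:ZMod p)^(k-i) * (k.choose i) * (if (-(i:ZMod p)) = 1 then 0 else 1)
      = (-1:ZMod p)^(k-i) * (k.choose i)
        - (-1:ZMod p)^(k-i) * (k.choose i) * (if i = p-1 then 1 else 0) := by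
    intro i hi
    simp only [mem_range] at hi
    have hcond : (-(i:ZMod p)) = 1 ↔ i = p - 1 := by
      constructor
      · intro h
        have h3 : (i : ZMod p) = ((p-1 : ℕ) : ZMod p) := by
          rw [neg_one_nat_cast]
          linear_combination -h
        have h4 := congrArg ZMod.val h3
        rwa [ZMod.val_cast_of_lt (by omega), ZMod.val_cast_of_lt (by omega)] at h4
      · intro h
        subst h
        rw [neg_one_nat_cast]
        ring
    by_cases hc : i = p - 1
    · rw [if_pos hc, if_pos (hcond.mpr hc)]
      ring
    · rw [if_neg hc, if_neg (fun hx => hc (hcond.mp hx))]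
      ring
  rw [Finset.sum_congr rfl split, Finset.sum_sub_distrib]
  have first : ∑ i ∈ range (k+1), (-1:ZMod p)^(k-i) * ((k.choose i : ZMod p))
      = ((k.factorial : ZMod p)) * (stirling2 0 k : ZMod p) := by
    rw [F_cast]
    refine Finset.sum_congr rfl fun i hi => ?_
    rw [pow_zero, mul_one]
  have second : ∑ i ∈ range (k+1),
      (-1:ZMod p)^(k-i) * (k.choose i) * (if i = p-1 then 1 else 0)
      = if k = p - 1 then 1 else 0 := by
    by_cases hc : k = p - 1
    · subst hc
      rw [if_pos rfl, Finset.sum_eq_single (p-1)]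
      · simp [stirling2_self]
      · intro b hb hbne
        rw [if_neg hbne]
        ring
      · intro hmem
        simp only [mem_range] at hmem
        omega
    · rw [if_neg hc]
      refine Finset.sum_eq_zero fun i hi => ?_
      simp only [mem_range] at hi
      have : i ≠ p - 1 := by omega
      rw [if_neg this]
      ring
  rw [first, second, stirling2_zero_left]
  have hfval : ((k.factorial : ZMod p)) * (if k = p-1 then 1 else 0) = -(if k = p-1 then 1 else 0) := by
    by_cases hc : k = p - 1
    · subst hc
      simp only [if_pos rfl]
      simpa using ZMod.wilsons_lemma p
    · simp [hc]
  rw [mul_add, hfval]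
  by_cases h0 : k = 0 <;> simp [h0, sub_eq_add_neg]

noncomputable def bp (n : ℕ) : Polynomial (ZMod p) := bellPoly (ZMod p) n

lemma bp_eq_sum {n : ℕ} (N : ℕ) (h : n + 1 ≤ N) :
    bp p n = ∑ k ∈ range N, C (stirling2 n k : ZMod p) * X^k := by
  rw [bp, bellPoly]
  apply Finset.sum_subset (Finset.range_subset_range.mpr h)
  intro k _ hk
  simp only [mem_range, not_lt] at hk
  rw [stirling2_eq_zero_of_lt n k (by omega)]
  simp

lemma bp_zero : bp p 0 = 1 := by
  rw [bp, bellPoly]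
  simp [stirling2]

lemma bp_one : bp p 1 = X := by
  rw [bp, bellPoly]
  rw [Finset.sum_range_succ, Finset.sum_range_one]
  norm_num [stirling2_one]

lemma bp_succ (n : ℕ) :
    bp p (n+1) = X * bp p n + X * derivative (bp p n) := by
  have e1 : bp p (n+1)
      = ∑ k ∈ range (n+1), C ((stirling2 n (k+1) : ZMod p) * ((k:ZMod p)+1) + (stirling2 n k : ZMod p)) * X^(k+1) := by
    rw [bp, bellPoly, Finset.sum_range_succ' _ (n+1)]
    simp only [stirling2_zero_right, Nat.cast_zero, map_zero, zero_mul, pow_zero, add_zero]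
    refine Finset.sum_congr rfl fun k hk => ?_
    rw [stirling2_succ]
    push_cast
    ring_nf
  have e2 : X * derivative (bp p n)
      = ∑ k ∈ range (n+1), C ((stirling2 n (k+1) : ZMod p) * ((k:ZMod p)+1)) * X^(k+1) := by
    rw [bp, bellPoly, derivative_sum, Finset.mul_sum]
    rw [Finset.sum_range_succ' _ n, Finset.sum_range_succ _ n]
    rw [stirling2_eq_zero_of_lt n (n+1) (by omega)]
    simp only [derivative_C_mul_X_pow, Nat.cast_zero, map_zero, zero_mul, map_mul, pow_zero,
      mul_zero, zero_add, add_zero, Nat.cast_ofNat, mul_one, Nat.cast_zero]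
    simp only [derivative_C, mul_zero, add_zero, Nat.add_sub_cancel]
    refine Finset.sum_congr rfl fun k hk => ?_
    push_cast
    ring
  have e3 : X * bp p n = ∑ k ∈ range (n+1), C (stirling2 n k : ZMod p) * X^(k+1) := by
    rw [bp, bellPoly, Finset.mul_sum]
    refine Finset.sum_congr rfl fun k hk => ?_
    ring
  rw [e1, e2, e3, ← Finset.sum_add_distrib]
  refine Finset.sum_congr rfl fun k hk => ?_
  rw [map_add]
  ring

lemma bp_p : bp p p = X + X^p := by
  have hp1 : 1 < p := hp.out.one_lt
  rw [bp, bellPoly, Finset.sum_range_succ, stirling2_self]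
  have e : ∑ k ∈ range p, C (stirling2 p k : ZMod p) * X^k = X := by
    have e2 : ∀ k ∈ range p, C (stirling2 p k : ZMod p) * X^k
        = if k = 1 then X else 0 := by
      intro k hk
      simp only [mem_range] at hk
      rw [stirling2_p_mod p k hk]
      split_ifs with h
      · subst h; simp
      · simp
    rw [Finset.sum_congr rfl e2, Finset.sum_ite_eq' (range p) 1 (fun _ => X)]
    simp [hp1]
  rw [e]
  simp

lemma touchard : ∀ n, bp p (n + p) = bp p (n+1) + X^p * bp p n := by
  intro n
  induction n with
  | zero =>
    rw [zero_add, bp_p, bp_one, bp_zero]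
    ring
  | succ n ih =>
    have h1 : n + 1 + p = (n + p) + 1 := by omega
    rw [h1, bp_succ, ih]
    rw [derivative_add, derivative_mul, derivative_X_pow]
    have hC : (C (p : ZMod p)) = 0 := by
      rw [ZMod.natCast_self, map_zero]
    rw [hC]
    rw [bp_succ p (n+1), bp_succ p n]
    ring

lemma base_sum : ∑ j ∈ range p, C ((-1:ZMod p)^j) * bp p j = 1 + X^(p-1) := by
  have hp1 : 1 < p := hp.out.one_lt
  have e1 : ∀ j ∈ range p, C ((-1:ZMod p)^j) * bp p j
      = ∑ k ∈ range p, C ((-1:ZMod p)^j * (stirling2 j k : ZMod p)) * X^k := by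
    intro j hj
    simp only [mem_range] at hj
    rw [bp_eq_sum p (n := j) p (by omega), Finset.mul_sum]
    refine Finset.sum_congr rfl fun k hk => ?_
    rw [map_mul]
    ring
  rw [Finset.sum_congr rfl e1, Finset.sum_comm]
  have e2 : ∀ k ∈ range p, ∑ j ∈ range p, C ((-1:ZMod p)^j * (stirling2 j k : ZMod p)) * X^k
      = ((if k = 0 then 1 else 0) + (if k = p-1 then 1 else 0 : Polynomial (ZMod p))) * X^k := by
    intro k hk
    simp only [mem_range] at hk
    rw [← Finset.sum_mul, ← map_sum (C : ZMod p →+* Polynomial (ZMod p))]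
    rw [alt_sum_stirling p k hk]
    congr 1
    rw [map_add]
    congr 1 <;> split_ifs <;> simp
  rw [Finset.sum_congr rfl e2]
  have e3 : ∑ k ∈ range p, ((if k = 0 then 1 else 0) + (if k = p-1 then 1 else 0 : Polynomial (ZMod p))) * X^k
      = (∑ k ∈ range p, (if k = 0 then 1 else 0 : Polynomial (ZMod p)) * X^k)
        + ∑ k ∈ range p, (if k = p-1 then 1 else 0 : Polynomial (ZMod p)) * X^k := by
    rw [← Finset.sum_add_distrib]
    exact Finset.sum_congr rfl fun k _ => by ring
  rw [e3]
  congr 1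
  · have : ∀ k ∈ range p, (if k = 0 then 1 else 0 : Polynomial (ZMod p)) * X^k
        = if k = 0 then X^k else 0 := by
      intro k _; split_ifs <;> simp
    rw [Finset.sum_congr rfl this, Finset.sum_ite_eq' (range p) 0 (fun k => X^k),
      if_pos (Finset.mem_range.mpr (by omega))]
    simp
  · have : ∀ k ∈ range p, (if k = p-1 then 1 else 0 : Polynomial (ZMod p)) * X^k
        = if k = p-1 then X^k else 0 := by
      intro k _; split_ifs <;> simp
    rw [Finset.sum_congr rfl this, Finset.sum_ite_eq' (range p) (p-1) (fun k => X^k),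
      if_pos (Finset.mem_range.mpr (by omega))]

/-! ### The auxiliary algebra `A = R[θ]/(θ^p - θ - x^p)` -/

noncomputable def fpoly : Polynomial (Polynomial (ZMod p)) :=
  X ^ p - (X + C (X ^ p))

lemma fpoly_monic : (fpoly p).Monic := by
  apply monic_X_pow_sub
  calc degree (X + C (X ^ p) : Polynomial (Polynomial (ZMod p))) = 1 :=
        degree_X_add_C (X ^ p)
    _ < p := by exact_mod_cast hp.out.one_lt

lemma fpoly_natDegree : (fpoly p).natDegree = p := by
  have hdeg : (fpoly p).degree = p := by
    rw [fpoly]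
    rw [degree_sub_eq_left_of_degree_lt]
    · exact degree_X_pow p
    · rw [degree_X_pow, degree_X_add_C (X ^ p)]
      exact_mod_cast hp.out.one_lt
  exact natDegree_eq_of_degree_eq_some hdeg

noncomputable def pb : PowerBasis (Polynomial (ZMod p)) (AdjoinRoot (fpoly p)) :=
  AdjoinRoot.powerBasis' (fpoly_monic p)

lemma pb_dim : (pb p).dim = p := by
  have h : (pb p).dim = (fpoly p).natDegree := rfl
  rw [h, fpoly_natDegree]

lemma pb_gen : (pb p).gen = AdjoinRoot.root (fpoly p) := rfl

noncomputable def φ : AdjoinRoot (fpoly p) →ₗ[Polynomial (ZMod p)] Polynomial (ZMod p) :=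
  (pb p).basis.constr ℕ (fun i => bp p (i : ℕ))

lemma phi_pow_lt {n : ℕ} (h : n < p) :
    φ p ((AdjoinRoot.root (fpoly p))^n) = bp p n := by
  have hd : n < (pb p).dim := by
    rw [pb_dim]
    exact h
  have hb : (AdjoinRoot.root (fpoly p))^n = (pb p).basis ⟨n, hd⟩ := by
    rw [(pb p).basis_eq_pow, pb_gen]
  rw [hb, φ, Module.Basis.constr_basis]

lemma theta_p : (AdjoinRoot.root (fpoly p))^p
    = AdjoinRoot.root (fpoly p)
      + algebraMap (Polynomial (ZMod p)) (AdjoinRoot (fpoly p)) (X^p) := by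
  have h : Polynomial.eval₂ (AdjoinRoot.of (fpoly p)) (AdjoinRoot.root (fpoly p))
      (X ^ p - (X + C (X ^ p))) = 0 := AdjoinRoot.eval₂_root (fpoly p)
  simp only [eval₂_sub, eval₂_add, eval₂_pow, eval₂_X, eval₂_C] at h
  rw [AdjoinRoot.algebraMap_eq]
  linear_combination h

instance : Nontrivial (AdjoinRoot (fpoly p)) := by
  refine ⟨0, 1, fun h => ?_⟩
  have h2 := congrArg (φ p) h
  rw [map_zero] at h2
  have h3 : (1 : AdjoinRoot (fpoly p)) = (AdjoinRoot.root (fpoly p))^0 := by rw [pow_zero]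
  rw [h3, phi_pow_lt p hp.out.pos, bp_zero] at h2
  exact one_ne_zero h2.symm

instance : CharP (AdjoinRoot (fpoly p)) p :=
  charP_of_injective_algebraMap' (ZMod p) p

lemma phi_pow (n : ℕ) : φ p ((AdjoinRoot.root (fpoly p))^n) = bp p n := by
  induction n using Nat.strong_induction_on with
  | _ n ih =>
    by_cases h : n < p
    · exact phi_pow_lt p h
    · push_neg at h
      set θ := AdjoinRoot.root (fpoly p) with hθ
      obtain ⟨m, rfl⟩ : ∃ m, n = m + p := ⟨n - p, by omega⟩
      have hp1 : 1 < p := hp.out.one_lt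
      have e1 : θ^(m+p) = θ^(m+1) + (X^p : Polynomial (ZMod p)) • θ^m := by
        rw [pow_add, theta_p, Algebra.smul_def]
        ring
      rw [e1, map_add, LinearMap.map_smul, ih (m+1) (by omega), ih m (by omega),
        smul_eq_mul, touchard]

lemma e_pow_succ (a : ℕ) :
    (∑ r ∈ Icc 1 a, (X : Polynomial (ZMod p))^(p^r))^p + X^p
      = ∑ r ∈ Icc 1 (a+1), (X : Polynomial (ZMod p))^(p^r) := by
  induction a with
  | zero =>
    rw [show Icc 1 0 = (∅ : Finset ℕ) by rfl]
    rw [Finset.sum_empty, zero_pow hp.out.ne_zero, zero_add]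
    rw [show Icc 1 1 = {1} by rfl, Finset.sum_singleton, pow_one]
  | succ a ih =>
    rw [Finset.sum_Icc_succ_top (by omega : 1 ≤ a + 1), add_pow_char, add_comm _ (X^p),
      ← add_assoc, add_comm (X^p), ih, Finset.sum_Icc_succ_top (by omega : 1 ≤ a + 2)]
    congr 1
    rw [← pow_mul, ← pow_succ]

lemma theta_pow_pa (a : ℕ) : (AdjoinRoot.root (fpoly p))^(p^a)
    = AdjoinRoot.root (fpoly p)
      + algebraMap (Polynomial (ZMod p)) (AdjoinRoot (fpoly p))
          (∑ r ∈ Icc 1 a, (X : Polynomial (ZMod p))^(p^r)) := by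
  induction a with
  | zero =>
    rw [pow_zero, pow_one, show Icc 1 0 = (∅ : Finset ℕ) by rfl, Finset.sum_empty,
      map_zero, add_zero]
  | succ a ih =>
    rw [pow_succ, pow_mul, ih, add_pow_char, theta_p, ← map_pow, add_assoc, ← map_add,
      add_comm ((X:Polynomial (ZMod p))^p), e_pow_succ]

lemma sum_Icc_one {M : Type*} [AddCommMonoid M] (n : ℕ) (f : ℕ → M) :
    ∑ k ∈ Icc 1 n, f k = ∑ i ∈ range n, f (i+1) := by
  induction n with
  | zero => rfl
  | succ n ih =>
    rw [Finset.sum_Icc_succ_top (by omega : 1 ≤ n + 1), ih, Finset.sum_range_succ]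

lemma choose_p_sub_one (j : ℕ) (hj : j < p) : (((p-1).choose j : ZMod p)) = (-1)^j := by
  induction j with
  | zero => simp
  | succ j ih =>
    have hj' : j < p := by omega
    have hid := Nat.choose_succ_right_eq (p-1) j
    have hcast : (((p-1).choose (j+1) : ZMod p)) * ((j:ZMod p)+1)
        = ((p-1).choose j : ZMod p) * ((p-1-j : ℕ) : ZMod p) := by
      have h := congrArg (Nat.cast : ℕ → ZMod p) hid
      push_cast at h
      convert h using 2
    have hsub : ((p-1-j : ℕ) : ZMod p) = -((j:ZMod p)+1) := by
      have h1 : (p-1-j) + (j+1) = p := by omega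
      have h2 := congrArg (Nat.cast : ℕ → ZMod p) h1
      push_cast at h2
      rw [ZMod.natCast_self] at h2
      linear_combination h2
    have hne : ((j:ZMod p)+1) ≠ 0 := by
      have h3 : ((j+1 : ℕ) : ZMod p) ≠ 0 := by
        rw [Ne, ZMod.natCast_eq_zero_iff]
        intro hd
        exact absurd (Nat.le_of_dvd (by omega) hd) (by omega)
      push_cast at h3
      exact h3
    apply mul_right_cancel₀ hne
    rw [hcast, ih hj', hsub, pow_succ]
    ring

lemma phi_K : φ p ((1 + AdjoinRoot.root (fpoly p))^(p-1) - 1) = X^(p-1) := by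
  have hexp : (1 + AdjoinRoot.root (fpoly p))^(p-1)
      = ∑ j ∈ range p, ((p-1).choose j : Polynomial (ZMod p)) • (AdjoinRoot.root (fpoly p))^j := by
    rw [add_comm, add_pow]
    have hp1 : p - 1 + 1 = p := by have := hp.out.one_lt; omega
    rw [hp1]
    refine Finset.sum_congr rfl fun j hj => ?_
    rw [one_pow, mul_one, Algebra.smul_def, map_natCast]
    ring
  rw [map_sub, hexp, map_sum]
  have h1 : (1 : AdjoinRoot (fpoly p)) = (AdjoinRoot.root (fpoly p))^0 := (pow_zero _).symm
  rw [h1, phi_pow, bp_zero]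
  have e1 : ∀ j ∈ range p, φ p (((p-1).choose j : Polynomial (ZMod p)) • (AdjoinRoot.root (fpoly p))^j)
      = C ((-1:ZMod p)^j) * bp p j := by
    intro j hj
    simp only [mem_range] at hj
    rw [LinearMap.map_smul, phi_pow, smul_eq_mul]
    congr 1
    rw [← choose_p_sub_one p j hj]
    simp [map_natCast]
  rw [Finset.sum_congr rfl e1, base_sum]
  ring

theorem key (a : ℕ) :
    ∑ k ∈ Icc 1 (p^a - 1), C ((-1:ZMod p)^k) * bp p k
      = ∑ r ∈ Icc 1 a, (X : Polynomial (ZMod p))^(p^r - 1) := by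
  set θ := AdjoinRoot.root (fpoly p) with hθdef
  set E : Polynomial (ZMod p) := ∑ r ∈ Icc 1 a, X^(p^r) with hEdef
  set G : AdjoinRoot (fpoly p) := ∑ k ∈ Icc 1 (p^a - 1), (-θ)^k with hGdef
  set K : AdjoinRoot (fpoly p) := (1 + θ)^(p-1) - 1 with hKdef
  have hNpos : 0 < p^a := pow_pos hp.out.pos a
  have hrange : ∑ k ∈ range (p^a), (-θ)^k = 1 + G := by
    have hsplit : p^a = (p^a - 1) + 1 := by omega
    rw [hsplit, Finset.sum_range_succ' _ (p^a - 1), pow_zero, hGdef, sum_Icc_one]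
    exact add_comm _ _
  have hgeom := geom_sum_mul (-θ) (p^a)
  have hneg : (-θ)^(p^a) = -(θ^(p^a)) := by
    rw [neg_pow, neg_one_pow_char_pow]
    ring
  rw [hrange, hneg, theta_pow_pa] at hgeom
  have hGE : (1+θ) * G = algebraMap (Polynomial (ZMod p)) (AdjoinRoot (fpoly p)) E := by
    linear_combination -hgeom
  have hK : (1+θ) * K = algebraMap (Polynomial (ZMod p)) (AdjoinRoot (fpoly p)) (X^p) := by
    have hp1 : p - 1 + 1 = p := by have := hp.out.one_lt; omega
    have h1 : (1+θ) * K = (1+θ)^p - (1+θ) := by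
      rw [hKdef, mul_sub, mul_one, ← pow_succ', hp1]
    rw [h1, add_pow_char, one_pow, theta_p]
    ring
  have hmain : algebraMap (Polynomial (ZMod p)) (AdjoinRoot (fpoly p)) (X^p) * G
      = algebraMap (Polynomial (ZMod p)) (AdjoinRoot (fpoly p)) E * K := by
    calc algebraMap (Polynomial (ZMod p)) (AdjoinRoot (fpoly p)) (X^p) * G
        = ((1+θ)*K)*G := by rw [hK]
      _ = K * ((1+θ)*G) := by ring
      _ = K * algebraMap (Polynomial (ZMod p)) (AdjoinRoot (fpoly p)) E := by rw [hGE]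
      _ = algebraMap (Polynomial (ZMod p)) (AdjoinRoot (fpoly p)) E * K := by ring
  have hsmul : ∀ (r : Polynomial (ZMod p)) (z : AdjoinRoot (fpoly p)),
      algebraMap (Polynomial (ZMod p)) (AdjoinRoot (fpoly p)) r * z = r • z :=
    fun r z => (Algebra.smul_def r z).symm
  rw [hsmul, hsmul] at hmain
  have happ := congrArg (φ p) hmain
  rw [LinearMap.map_smul, LinearMap.map_smul, smul_eq_mul, smul_eq_mul] at happ
  have hφG : φ p G = ∑ k ∈ Icc 1 (p^a - 1), C ((-1:ZMod p)^k) * bp p k := by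
    rw [hGdef, map_sum]
    refine Finset.sum_congr rfl fun k hk => ?_
    have h2 : (-θ)^k = ((-1 : Polynomial (ZMod p))^k) • θ^k := by
      rw [neg_pow, Algebra.smul_def, map_pow, map_neg, map_one]
    rw [h2, LinearMap.map_smul, phi_pow, smul_eq_mul]
    congr 1
    simp [map_pow]
  have hφK : φ p K = X^(p-1) := by
    rw [hKdef]
    exact phi_K p
  rw [hφG, hφK] at happ
  have hE : E * X^(p-1) = X^p * ∑ r ∈ Icc 1 a, (X : Polynomial (ZMod p))^(p^r - 1) := by
    rw [hEdef, Finset.sum_mul, Finset.mul_sum]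
    refine Finset.sum_congr rfl fun r hr => ?_
    rw [← pow_add, ← pow_add]
    congr 1
    have h3 : 1 ≤ p^r := Nat.one_le_pow _ _ hp.out.pos
    have h4 := hp.out.one_lt
    omega
  rw [hE] at happ
  exact mul_left_cancel₀ (pow_ne_zero p X_ne_zero) happ

lemma bell_map (n : ℕ) :
    (bellPoly ℤ_[p] n).map (PadicInt.toZMod) = bp p n := by
  rw [bellPoly, bp, bellPoly, ← Polynomial.coe_mapRingHom, map_sum]
  refine Finset.sum_congr rfl fun k hk => ?_
  rw [Polynomial.coe_mapRingHom, Polynomial.map_mul, Polynomial.map_C, Polynomial.map_pow,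
    Polynomial.map_X, map_natCast]

end ModP

end AltBell

open Polynomial in
/-- For a prime `p` and `a ≥ 1`,
`∑_{k=1}^{p^a-1} (-1)^k B_k(x) ≡ ∑_{r=1}^a x^{p^r-1}` mod `p·ℤ_p[x]`. -/
theorem alt_sum_bellPoly (p : ℕ) [Fact p.Prime] (a : ℕ) (ha : 0 < a) :
    (p : Polynomial ℤ_[p]) ∣
      (∑ k ∈ Finset.Icc 1 (p ^ a - 1), Polynomial.C ((-1 : ℤ_[p]) ^ k) * bellPoly ℤ_[p] k) -
        ∑ r ∈ Finset.Icc 1 a, X ^ (p ^ r - 1) := by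
  set D := (∑ k ∈ Finset.Icc 1 (p ^ a - 1), Polynomial.C ((-1 : ℤ_[p]) ^ k) * bellPoly ℤ_[p] k) -
      ∑ r ∈ Finset.Icc 1 a, (X : Polynomial ℤ_[p]) ^ (p ^ r - 1) with hD
  have hmap : D.map (PadicInt.toZMod) = 0 := by
    rw [hD, Polynomial.map_sub]
    have h1 : (∑ k ∈ Finset.Icc 1 (p ^ a - 1),
        Polynomial.C ((-1 : ℤ_[p]) ^ k) * bellPoly ℤ_[p] k).map (PadicInt.toZMod)
        = ∑ k ∈ Finset.Icc 1 (p ^ a - 1), Polynomial.C ((-1 : ZMod p) ^ k) * AltBell.bp p k := by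
      rw [← Polynomial.coe_mapRingHom, map_sum]
      refine Finset.sum_congr rfl fun k hk => ?_
      rw [Polynomial.coe_mapRingHom, Polynomial.map_mul, Polynomial.map_C, AltBell.bell_map]
      congr 1
      rw [map_pow, map_neg, map_one]
    have h2 : (∑ r ∈ Finset.Icc 1 a, (X : Polynomial ℤ_[p]) ^ (p ^ r - 1)).map (PadicInt.toZMod)
        = ∑ r ∈ Finset.Icc 1 a, (X : Polynomial (ZMod p)) ^ (p ^ r - 1) := by
      rw [← Polynomial.coe_mapRingHom, map_sum]
      refine Finset.sum_congr rfl fun r hr => ?_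
      rw [Polynomial.coe_mapRingHom, Polynomial.map_pow, Polynomial.map_X]
    rw [h1, h2, AltBell.key p a, sub_self]
  have hC : (p : Polynomial ℤ_[p]) = Polynomial.C ((p : ℤ_[p])) := (map_natCast Polynomial.C p).symm
  rw [hC, Polynomial.C_dvd_iff_dvd_coeff]
  intro n
  have hc : PadicInt.toZMod (D.coeff n) = 0 := by
    rw [← Polynomial.coeff_map, hmap, Polynomial.coeff_zero]
  have hker : D.coeff n ∈ RingHom.ker (PadicInt.toZMod : ℤ_[p] →+* ZMod p) :=
    RingHom.mem_ker.mpr hc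
  rw [PadicInt.ker_toZMod, PadicInt.maximalIdeal_eq_span_p, Ideal.mem_span_singleton] at hker
  exact hker
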